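/- If X(β) is a random point in ℝ^d with density f̃_{d,β}, then √(2β)·X(β) converges in distribution to the standard normal distribution on ℝ^d as β → +∞. -/

import Mathlib

open MeasureTheory Real Filter
open Topology


lemma gautschi_upper {s x : ℝ} (hs0 : 0 < s) (hs1 : s < 1) (hx : 0 < x) :
    Gamma (x + s) ≤ Gamma x * x ^ s := by
  have h := Real.Gamma_mul_add_mul_le_rpow_Gamma_mul_rpow_Gamma (s := x) (t := x + 1)
    (a := 1 - s) (b := s) hx (by linarith) (by linarith) hs0 (by ring)
  have hxx : (1 - s) * x + s * (x + 1) = x + s := by ring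
  rw [hxx, Real.Gamma_add_one hx.ne'] at h
  have hΓ : 0 < Gamma x := Real.Gamma_pos_of_pos hx
  calc Gamma (x + s) ≤ Gamma x ^ (1 - s) * (x * Gamma x) ^ s := h
    _ = Gamma x * x ^ s := by
        rw [Real.mul_rpow hx.le hΓ.le, ← mul_assoc,
          show Gamma x ^ (1-s) * x ^ s * Gamma x ^ s
            = Gamma x ^ (1-s) * Gamma x ^ s * x ^ s by ring,
          ← Real.rpow_add hΓ]
        norm_num

lemma gautschi_lower {s x : ℝ} (hs0 : 0 < s) (hs1 : s < 1) (hx : 0 < x) :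
    Gamma x * x * (x + s) ^ (s - 1) ≤ Gamma (x + s) := by
  have hxs : 0 < x + s := by linarith
  have h := Real.Gamma_mul_add_mul_le_rpow_Gamma_mul_rpow_Gamma (s := x + s) (t := x + s + 1)
    (a := s) (b := 1 - s) hxs (by linarith) hs0 (by linarith) (by ring)
  have hxx : s * (x + s) + (1 - s) * (x + s + 1) = x + 1 := by ring
  rw [hxx, Real.Gamma_add_one hx.ne', Real.Gamma_add_one hxs.ne'] at h
  have hΓ : 0 < Gamma (x + s) := Real.Gamma_pos_of_pos hxs
  have h2 : Gamma (x + s) ^ s * ((x + s) * Gamma (x + s)) ^ (1 - s)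
      = Gamma (x + s) * (x + s) ^ (1 - s) := by
    rw [Real.mul_rpow hxs.le hΓ.le,
      show Gamma (x+s) ^ s * ((x+s) ^ (1-s) * Gamma (x+s) ^ (1-s))
        = Gamma (x+s) ^ s * Gamma (x+s) ^ (1-s) * (x+s) ^ (1-s) by ring,
      ← Real.rpow_add hΓ]
    norm_num
  rw [h2] at h
  have hpow : 0 < (x + s) ^ (1 - s) := Real.rpow_pos_of_pos hxs _
  rw [show s - 1 = -(1 - s) by ring, Real.rpow_neg hxs.le]
  rw [mul_inv_le_iff₀ hpow, mul_comm (Gamma x) x]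
  exact h

lemma tendsto_gamma_ratio_frac {s : ℝ} (hs0 : 0 < s) (hs1 : s ≤ 1) :
    Tendsto (fun x => Gamma (x + s) / (Gamma x * x ^ s)) atTop (𝓝 1) := by
  rcases eq_or_lt_of_le hs1 with rfl | hs1
  · apply Tendsto.congr' _ tendsto_const_nhds
    filter_upwards [eventually_gt_atTop (0:ℝ)] with x hx
    have hΓ : 0 < Gamma x := Real.Gamma_pos_of_pos hx
    rw [Real.Gamma_add_one hx.ne', Real.rpow_one, mul_comm (Gamma x) x,
      div_self (mul_pos hx hΓ).ne']
  · have hlow : Tendsto (fun x : ℝ => (x / (x + s)) ^ (1 - s)) atTop (𝓝 1) := by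
      have h1 : Tendsto (fun x : ℝ => x / (x + s)) atTop (𝓝 1) := by
        have : Tendsto (fun x : ℝ => 1 - s / (x + s)) atTop (𝓝 (1 - 0)) := by
          exact tendsto_const_nhds.sub
            (Tendsto.div_atTop tendsto_const_nhds (tendsto_atTop_add_const_right _ s tendsto_id))
        rw [sub_zero] at this
        apply this.congr'
        filter_upwards [eventually_gt_atTop (0:ℝ)] with x hx
        field_simp
        ring
      simpa using h1.rpow_const (Or.inl one_ne_zero)
    refine tendsto_of_tendsto_of_tendsto_of_le_of_le' hlow tendsto_const_nhds ?_ ?_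
    · filter_upwards [eventually_gt_atTop (0:ℝ)] with x hx
      have hΓ : 0 < Gamma x := Real.Gamma_pos_of_pos hx
      have hxs : 0 < x + s := by linarith
      have hden : 0 < Gamma x * x ^ s := by positivity
      rw [le_div_iff₀ hden, Real.div_rpow hx.le hxs.le]
      calc x ^ (1-s) / (x+s) ^ (1-s) * (Gamma x * x ^ s)
          = Gamma x * x * (x+s) ^ (-(1-s)) := by
            rw [Real.rpow_neg hxs.le]
            rw [div_eq_mul_inv]
            rw [show x ^ (1-s) * ((x+s) ^ (1-s))⁻¹ * (Gamma x * x ^ s)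
              = Gamma x * (x ^ (1-s) * x ^ s) * ((x+s) ^ (1-s))⁻¹ by ring,
              ← Real.rpow_add hx]
            norm_num
        _ ≤ Gamma (x + s) := by
            rw [show -(1-s) = s - 1 by ring]
            exact gautschi_lower hs0 hs1 hx
    · filter_upwards [eventually_gt_atTop (0:ℝ)] with x hx
      have hΓ : 0 < Gamma x := Real.Gamma_pos_of_pos hx
      have hden : 0 < Gamma x * x ^ s := by positivity
      rw [div_le_one hden]
      exact gautschi_upper hs0 hs1 hx

lemma tendsto_gamma_ratio : ∀ (n : ℕ) {a : ℝ}, 0 < a → a ≤ n + 1 →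
    Tendsto (fun x => Gamma (x + a) / (Gamma x * x ^ a)) atTop (𝓝 1) := by
  intro n
  induction n with
  | zero =>
    intro a ha0 ha1
    exact tendsto_gamma_ratio_frac ha0 (by simpa using ha1)
  | succ n ih =>
    intro a ha0 ha1
    by_cases h : a ≤ n + 1
    · exact ih ha0 h
    push_neg at h
    have ha1' : 0 < a - 1 := by
      have : (0:ℝ) ≤ (n:ℝ) := Nat.cast_nonneg n
      linarith
    have hub : a - 1 ≤ (n:ℝ) + 1 := by push_cast at ha1 ⊢; linarith
    have h2 : Tendsto (fun x : ℝ => (x + (a - 1)) / x) atTop (𝓝 1) := by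
      have : Tendsto (fun x : ℝ => 1 + (a - 1) / x) atTop (𝓝 (1 + 0)) :=
        tendsto_const_nhds.add (Tendsto.div_atTop tendsto_const_nhds tendsto_id)
      rw [add_zero] at this
      apply this.congr'
      filter_upwards [eventually_gt_atTop (0:ℝ)] with x hx
      field_simp
    have key := (ih ha1' hub).mul h2
    rw [one_mul] at key
    apply key.congr'
    filter_upwards [eventually_gt_atTop (0:ℝ)] with x hx
    have hΓ : 0 < Gamma x := Real.Gamma_pos_of_pos hx
    have hxa : x + (a - 1) ≠ 0 := by positivity
    have hG : Gamma (x + a) = (x + (a-1)) * Gamma (x + (a-1)) := by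
      rw [show x + a = x + (a-1) + 1 by ring, Real.Gamma_add_one hxa]
    have hpow : x ^ a = x ^ (a-1) * x := by
      rw [show a = (a-1) + 1 by ring, Real.rpow_add hx, Real.rpow_one]
      ring_nf
    rw [hG, hpow]
    have hp1 : x ^ (a-1) ≠ 0 := (Real.rpow_pos_of_pos hx _).ne'
    field_simp

lemma tendsto_cfun {a : ℝ} (ha : 0 < a) :
    Tendsto (fun β : ℝ => (2*β) ^ (-a) * (Gamma β / (π ^ a * Gamma (β - a)))) atTop
      (𝓝 ((2*π) ^ (-a))) := by
  obtain ⟨n, hn⟩ := exists_nat_ge a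
  have h1 : Tendsto (fun x : ℝ => Gamma (x + a) / (Gamma x * x ^ a)) atTop (𝓝 1) :=
    tendsto_gamma_ratio n ha (hn.trans (by linarith))
  have h2 := h1.comp (tendsto_atTop_add_const_right atTop (-a) tendsto_id)
  have h3 : Tendsto (fun β : ℝ => ((β - a)/β) ^ a) atTop (𝓝 1) := by
    have hb : Tendsto (fun β : ℝ => 1 - a / β) atTop (𝓝 (1 - 0)) :=
      tendsto_const_nhds.sub (Tendsto.div_atTop tendsto_const_nhds tendsto_id)
    rw [sub_zero] at hb
    have hb2 : Tendsto (fun β : ℝ => (β - a)/β) atTop (𝓝 1) := by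
      apply hb.congr'
      filter_upwards [eventually_gt_atTop (0:ℝ)] with β hβ
      field_simp
    simpa using hb2.rpow_const (Or.inl one_ne_zero)
  have h4 := ((h2.mul h3).const_mul ((2*π) ^ (-a)))
  rw [one_mul, mul_one] at h4
  apply h4.congr'
  filter_upwards [eventually_gt_atTop (max a 0 : ℝ)] with β hβ
  have hβa : 0 < β - a := by simp only [max_lt_iff] at hβ; linarith [hβ.1]
  have hβ0 : 0 < β := by simp only [max_lt_iff] at hβ; exact hβ.2
  have hΓ : 0 < Gamma (β - a) := Real.Gamma_pos_of_pos hβa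
  simp only [Function.comp, id_eq]
  rw [show β + -a + a = β by ring]
  rw [Real.mul_rpow (by norm_num) hβ0.le, Real.mul_rpow (by norm_num) Real.pi_pos.le,
    Real.div_rpow hβa.le hβ0.le,
    Real.rpow_neg hβ0.le, Real.rpow_neg Real.pi_pos.le]
  have e1 : β ^ a ≠ 0 := (Real.rpow_pos_of_pos hβ0 _).ne'
  have e2 : (β - a) ^ a ≠ 0 := (Real.rpow_pos_of_pos hβa _).ne'
  have e3 : π ^ a ≠ 0 := (Real.rpow_pos_of_pos Real.pi_pos _).ne'
  have e4 : β + -a = β - a := by ring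
  rw [e4]
  field_simp

lemma rpow_decay_mono {s β₀ β : ℝ} (hs : 0 ≤ s) (h0 : 0 < β₀) (h : β₀ ≤ β) :
    (1 + s/(2*β)) ^ (-β) ≤ (1 + s/(2*β₀)) ^ (-β₀) := by
  have hβ : 0 < β := h0.trans_le h
  have hb : (0:ℝ) < 1 + s/(2*β) := by positivity
  have hb0 : (0:ℝ) < 1 + s/(2*β₀) := by positivity
  have key : (1 + s/(2*β₀)) ^ β₀ ≤ (1 + s/(2*β)) ^ β := by
    have hp : 1 ≤ β/β₀ := (one_le_div h0).mpr h
    have hx : (0:ℝ) ≤ s/(2*β) := by positivity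
    have b1 : 1 + (β/β₀) * (s/(2*β)) ≤ (1 + s/(2*β)) ^ (β/β₀) :=
      one_add_mul_self_le_rpow_one_add (by linarith) hp
    have e : (β/β₀) * (s/(2*β)) = s/(2*β₀) := by
      field_simp
    rw [e] at b1
    calc (1 + s/(2*β₀)) ^ β₀ ≤ ((1 + s/(2*β)) ^ (β/β₀)) ^ β₀ :=
        Real.rpow_le_rpow hb0.le b1 h0.le
      _ = (1 + s/(2*β)) ^ β := by
        rw [← Real.rpow_mul hb.le, div_mul_cancel₀ _ h0.ne']
  rw [Real.rpow_neg hb.le, Real.rpow_neg hb0.le]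
  exact inv_anti₀ (Real.rpow_pos_of_pos hb0 _) key

lemma tendsto_pow_exp {s : ℝ} (hs : 0 ≤ s) :
    Tendsto (fun β : ℝ => (1 + s/(2*β)) ^ (-β)) atTop (𝓝 (Real.exp (-s/2))) := by
  have h1 : Tendsto (fun β : ℝ => (1 + s/(2*β)) ^ (2*β)) atTop (𝓝 (Real.exp s)) :=
    (tendsto_one_add_div_rpow_exp s).comp (tendsto_id.const_mul_atTop two_pos)
  have h2 := h1.rpow_const (p := -2⁻¹) (Or.inl (Real.exp_pos s).ne')
  have he : Real.exp s ^ (-2⁻¹ : ℝ) = Real.exp (-s/2) := by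
    rw [← Real.exp_mul]
    congr 1
    ring
  rw [he] at h2
  apply h2.congr'
  filter_upwards [eventually_gt_atTop (0:ℝ)] with β hβ
  have hb : (0:ℝ) ≤ 1 + s/(2*β) := by positivity
  rw [← Real.rpow_mul hb]
  congr 1
  ring

lemma integral_withDensity_ofReal {α : Type*} [MeasurableSpace α] {ν : Measure α}
    {ρ : α → ℝ} (hρ : Measurable ρ) (hρ0 : ∀ x, 0 ≤ ρ x) (φ : α → ℝ) :
    ∫ x, φ x ∂(ν.withDensity fun x => ENNReal.ofReal (ρ x)) = ∫ x, ρ x * φ x ∂ν := by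
  rw [show (fun x => ENNReal.ofReal (ρ x))
      = (fun x => ((Real.toNNReal (ρ x) : NNReal) : ENNReal)) from rfl]
  rw [integral_withDensity_eq_integral_smul (hρ.real_toNNReal) φ]
  refine integral_congr_ae (Filter.Eventually.of_forall fun x => ?_)
  simp [NNReal.smul_def, Real.coe_toNNReal _ (hρ0 x)]

/-- If `X(β)` has the beta' density `f̃_{d,β}`, then `√(2β) X(β)` converges in distribution
(i.e. weakly, tested against bounded continuous functions) to the standard normal
distribution on `ℝ^d`, as `β → +∞`. -/
theorem betaPrime_rescaled_tendsto_gaussian (d : ℕ) (hd : 1 ≤ d)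
    (μ : ℝ → Measure (EuclideanSpace ℝ (Fin d)))
    (hμ : ∀ β : ℝ, (d : ℝ) / 2 < β → μ β = volume.withDensity (fun x =>
      ENNReal.ofReal
        ((Real.Gamma β / (Real.pi ^ ((d : ℝ) / 2) * Real.Gamma (β - (d : ℝ) / 2))) *
          (1 + ‖x‖ ^ 2) ^ (-β))))
    (γ : Measure (EuclideanSpace ℝ (Fin d)))
    (hγ : γ = volume.withDensity (fun x =>
      ENNReal.ofReal ((2 * Real.pi) ^ (-(d : ℝ) / 2) * Real.exp (-‖x‖ ^ 2 / 2)))) :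
    ∀ g : BoundedContinuousFunction (EuclideanSpace ℝ (Fin d)) ℝ,
      Tendsto (fun β : ℝ => ∫ x, g x ∂((μ β).map (fun x => Real.sqrt (2 * β) • x)))
        atTop (nhds (∫ x, g x ∂γ)) := by
  intro g
  have hd1 : (1:ℝ) ≤ (d:ℝ) := by exact_mod_cast hd
  set a : ℝ := (d:ℝ)/2 with ha_def
  have hapos : 0 < a := by rw [ha_def]; linarith
  set l : ℝ := (2*π) ^ (-a) with hl_def
  set f₀ : EuclideanSpace ℝ (Fin d) → ℝ := fun y => l * (Real.exp (-‖y‖^2/2) * g y) with hf₀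
  set F : ℝ → EuclideanSpace ℝ (Fin d) → ℝ := fun β y =>
    ((2*β) ^ (-a) * (Gamma β / (π ^ a * Gamma (β - a)))) *
      ((1 + ‖y‖^2/(2*β)) ^ (-β) * g y) with hF
  -- the γ integral
  have hγint : ∫ x, g x ∂γ = ∫ y, f₀ y := by
    rw [hγ]
    rw [integral_withDensity_ofReal
      (by fun_prop : Measurable fun x : EuclideanSpace ℝ (Fin d) => (2*π) ^ (-(d:ℝ)/2) * Real.exp (-‖x‖^2/2))
      (fun x => by positivity) g]
    refine integral_congr_ae (Filter.Eventually.of_forall fun y => ?_)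
    rw [hf₀, hl_def]
    rw [show -(d:ℝ)/2 = -a by rw [ha_def]; ring]
    ring
  -- dominated convergence
  have hDCT : Tendsto (fun β => ∫ y, F β y) atTop (𝓝 (∫ y, f₀ y)) := by
    set β₀ : ℝ := a + 1 with hβ₀def
    have hβ₀pos : 0 < β₀ := by rw [hβ₀def]; linarith
    have hc := tendsto_cfun hapos
    refine tendsto_integral_filter_of_dominated_convergence
      (fun y : EuclideanSpace ℝ (Fin d) => ((l+1) * ‖g‖) * (1 + ‖y‖^2/(2*β₀)) ^ (-β₀)) ?_ ?_ ?_ ?_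
    · filter_upwards [eventually_gt_atTop (0:ℝ)] with β hβ
      apply Continuous.aestronglyMeasurable
      refine continuous_const.mul (Continuous.mul ?_ g.continuous)
      refine Continuous.rpow_const (by fun_prop) (fun y => Or.inl ?_)
      have h2β : (0:ℝ) < 2*β := by linarith
      positivity
    · filter_upwards [eventually_ge_atTop β₀,
        hc.eventually (eventually_le_nhds (lt_add_one l)),
        eventually_gt_atTop (max a 0)] with β hβ hcle hβm
      refine Filter.Eventually.of_forall fun y => ?_
      have hβa : a < β := (le_max_left a 0).trans_lt hβm
      have hβpos : 0 < β := (le_max_right a 0).trans_lt hβm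
      have hΓ1 := Real.Gamma_pos_of_pos hβpos
      have hΓ2 := Real.Gamma_pos_of_pos (show 0 < β - a by linarith)
      have hc0a : (0:ℝ) ≤ (2*β) ^ (-a) := Real.rpow_nonneg (by linarith) _
      have hc0b : (0:ℝ) ≤ Gamma β / (π ^ a * Gamma (β - a)) :=
        div_nonneg hΓ1.le (mul_pos (Real.rpow_pos_of_pos Real.pi_pos _) hΓ2).le
      have hc0 : 0 ≤ (2*β) ^ (-a) * (Gamma β / (π ^ a * Gamma (β - a))) :=
        mul_nonneg hc0a hc0b
      have hs : (0:ℝ) ≤ ‖y‖^2 := by positivity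
      have hDpos : (0:ℝ) ≤ (1 + ‖y‖^2/(2*β)) ^ (-β) := by
        apply Real.rpow_nonneg
        have h2β : (0:ℝ) < 2*β := by linarith
        positivity
      calc ‖F β y‖
          = ((2*β) ^ (-a) * (Gamma β / (π ^ a * Gamma (β - a)))) *
              ((1 + ‖y‖^2/(2*β)) ^ (-β) * |g y|) := by
            rw [hF]
            simp only [Real.norm_eq_abs, abs_mul, abs_of_nonneg hc0a, abs_of_nonneg hc0b,
              abs_of_nonneg hDpos]
        _ ≤ (l+1) * ((1 + ‖y‖^2/(2*β₀)) ^ (-β₀) * ‖g‖) := by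
            have h1 : (1 + ‖y‖^2/(2*β)) ^ (-β) ≤ (1 + ‖y‖^2/(2*β₀)) ^ (-β₀) :=
              rpow_decay_mono hs hβ₀pos hβ
            have h2 : |g y| ≤ ‖g‖ := by
              rw [← Real.norm_eq_abs]; exact g.norm_coe_le_norm y
            have hD0 : (0:ℝ) ≤ (1 + ‖y‖^2/(2*β₀)) ^ (-β₀) := by positivity
            have hl0 : (0:ℝ) ≤ l := by
              rw [hl_def]
              exact Real.rpow_nonneg (by positivity) _
            exact mul_le_mul hcle (mul_le_mul h1 h2 (abs_nonneg _) hD0)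
              (mul_nonneg hDpos (abs_nonneg _)) (by linarith)
        _ ≤ ((l+1) * ‖g‖) * (1 + ‖y‖^2/(2*β₀)) ^ (-β₀) := le_of_eq (by ring)
    · -- integrability of the bound
      have hfin : ((Module.finrank ℝ (EuclideanSpace ℝ (Fin d)) : ℝ)) < 2*β₀ := by
        rw [finrank_euclideanSpace_fin]
        rw [hβ₀def, ha_def]; linarith
      have hint := integrable_rpow_neg_one_add_norm_sq (E := EuclideanSpace ℝ (Fin d)) (μ := volume) hfin
      have hint2 : Integrable (fun y : EuclideanSpace ℝ (Fin d) => (1 + ‖y‖^2/(2*β₀)) ^ (-β₀)) := by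
        refine (hint.const_mul ((2*β₀) ^ β₀)).mono'
          (Continuous.aestronglyMeasurable ?_) (Filter.Eventually.of_forall fun y => ?_)
        · refine Continuous.rpow_const (by fun_prop) (fun y => Or.inl ?_)
          positivity
        · have hs : (0:ℝ) ≤ ‖y‖^2 := by positivity
          have hb1 : (0:ℝ) < (1 + ‖y‖^2)/(2*β₀) := by positivity
          have hb2 : (1 + ‖y‖^2)/(2*β₀) ≤ 1 + ‖y‖^2/(2*β₀) := by
            rw [add_div]
            have : 1/(2*β₀) ≤ 1 := by
              rw [div_le_one (by positivity)]
              rw [hβ₀def]; linarith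
            linarith
          have key : (1 + ‖y‖^2/(2*β₀)) ^ (-β₀) ≤ (2*β₀) ^ β₀ * (1 + ‖y‖^2) ^ (-(2*β₀)/2) := by
            calc (1 + ‖y‖^2/(2*β₀)) ^ (-β₀)
                ≤ ((1 + ‖y‖^2)/(2*β₀)) ^ (-β₀) :=
                  Real.rpow_le_rpow_of_nonpos hb1 hb2 (by linarith)
              _ = (2*β₀) ^ β₀ * (1 + ‖y‖^2) ^ (-(2*β₀)/2) := by
                  rw [Real.div_rpow (by positivity) (by positivity),
                    Real.rpow_neg (by positivity : (0:ℝ) ≤ 2*β₀),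
                    show -(2*β₀)/2 = -β₀ by ring]
                  field_simp
          rw [Real.norm_eq_abs, abs_of_nonneg (by positivity)]
          exact key
      exact (hint2.const_mul _)
    · refine Filter.Eventually.of_forall fun y => ?_
      have hs : (0:ℝ) ≤ ‖y‖^2 := by positivity
      have hD := tendsto_pow_exp hs
      have hlim := hc.mul (hD.mul_const (g y))
      rw [hF, hf₀]
      convert hlim using 2
  -- eventual equality of the two integral expressions
  have heq : (fun β => ∫ y, F β y) =ᶠ[atTop]
      (fun β : ℝ => ∫ x, g x ∂((μ β).map (fun x => Real.sqrt (2 * β) • x))) := by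
    filter_upwards [eventually_gt_atTop (max a 0)] with β hβm
    have hβa : a < β := (le_max_left a 0).trans_lt hβm
    have hβ0 : 0 < β := (le_max_right a 0).trans_lt hβm
    have h2β : (0:ℝ) < 2*β := by linarith
    have hΓ1 := Real.Gamma_pos_of_pos hβ0
    have hΓ2 := Real.Gamma_pos_of_pos (show 0 < β - a by linarith)
    set R := Real.sqrt (2*β) with hRdef
    have hRpos : 0 < R := Real.sqrt_pos.mpr h2β
    have hT : Measurable (fun x : EuclideanSpace ℝ (Fin d) => R • x) := (continuous_const_smul R).measurable
    set ρ : EuclideanSpace ℝ (Fin d) → ℝ := fun x => Gamma β / (π ^ a * Gamma (β - a)) * (1 + ‖x‖^2) ^ (-β)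
      with hρdef
    have hρmeas : Measurable ρ := by
      refine Continuous.measurable ?_
      refine continuous_const.mul ?_
      refine Continuous.rpow_const (by fun_prop) (fun x => Or.inl ?_)
      positivity
    have hρ0 : ∀ x, 0 ≤ ρ x := by
      intro x
      refine mul_nonneg (div_nonneg hΓ1.le
        (mul_pos (Real.rpow_pos_of_pos Real.pi_pos _) hΓ2).le) (Real.rpow_nonneg ?_ _)
      positivity
    rw [hμ β hβa]
    rw [MeasureTheory.integral_map hT.aemeasurable g.continuous.aestronglyMeasurable]
    rw [integral_withDensity_ofReal hρmeas hρ0 (fun x => g (R • x))]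
    set f' : EuclideanSpace ℝ (Fin d) → ℝ := fun y => (Gamma β / (π ^ a * Gamma (β - a))) *
      ((1 + ‖y‖^2/(2*β)) ^ (-β) * g y) with hf'
    have hkey : ∀ x : EuclideanSpace ℝ (Fin d), ρ x * g (R • x) = f' (R • x) := by
      intro x
      have hnorm : ‖R • x‖^2 = (2*β) * ‖x‖^2 := by
        rw [norm_smul, mul_pow, Real.norm_eq_abs, abs_of_nonneg (Real.sqrt_nonneg _),
          Real.sq_sqrt h2β.le]
      rw [hρdef, hf']
      simp only
      rw [hnorm, mul_div_cancel_left₀ _ h2β.ne']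
      ring
    rw [show (∫ x, ρ x * g (R • x)) = ∫ x, f' (R • x) from
      integral_congr_ae (Filter.Eventually.of_forall hkey)]
    rw [MeasureTheory.Measure.integral_comp_smul volume f' R]
    have hRd : R ^ Module.finrank ℝ (EuclideanSpace ℝ (Fin d)) = (2*β) ^ a := by
      rw [finrank_euclideanSpace_fin,
        hRdef, Real.sqrt_eq_rpow, ← Real.rpow_natCast ((2*β) ^ ((1:ℝ)/2)) d,
        ← Real.rpow_mul h2β.le, ha_def]
      congr 1
      ring
    rw [hRd]
    have habs : |((2*β) ^ a)⁻¹| = (2*β) ^ (-a) := by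
      rw [abs_of_nonneg (inv_nonneg.mpr (Real.rpow_nonneg h2β.le _)),
        ← Real.rpow_neg h2β.le]
    rw [habs, smul_eq_mul, ← integral_const_mul]
    refine (integral_congr_ae (Filter.Eventually.of_forall fun y => ?_)).symm
    rw [hF, hf']
    simp only
    ring
  rw [hγint]
  exact hDCT.congr' heq
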